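/- (Penalization limit for the obstacle problem.) Let φ : ℝ^k → ℝ be continuous and let f̄ : ℝ^k × ℝ × ℝ^d → ℝ be continuous and Lipschitz in (y,z) uniformly in x. Suppose that for each n ≥ 1, v̄^n : ℝ^k → ℝ is a continuous viscosity solution of the penalized equation r v(x) − ⟨b(x), D_x v(x)⟩ − ½Tr[(σσᵀ)(x) D²_x v(x)] − f̄(x, v(x), σ(x)ᵀ D_x v(x)) − n (v(x) − φ(x))⁻ = 0, that v̄^n ≤ v̄^{n+1}, and that v̄^n converges uniformly on compact subsets of ℝ^k to a continuous function v̄ satisfying v̄ ≥ φ pointwise. Then v̄ is a viscosity solution (both subsolution and supersolution) of the obstacle problem min{ v̄(x) − φ(x), r v̄(x) − ⟨b(x), D_x v̄(x)⟩ − ½Tr[(σσᵀ)(x) D²_x v̄(x)] − f̄(x, v̄(x), σ(x)ᵀ D_x v̄(x)) } = 0. -/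

import Mathlib

open Filter Matrix

noncomputable section

abbrev Vec (n : ℕ) := Fin n → ℝ

/-- Euclidean norm on `Fin n → ℝ`. -/
def eucNorm {n : ℕ} (v : Vec n) : ℝ := Real.sqrt (∑ i, v i ^ 2)

/-- Euclidean inner product. -/
def dotp {n : ℕ} (u v : Vec n) : ℝ := ∑ i, u i * v i

/-- Quadratic form `⟨X v, v⟩`. -/
def quadForm {n : ℕ} (X : Matrix (Fin n) (Fin n) ℝ) (v : Vec n) : ℝ :=
  ∑ i, ∑ j, X i j * v i * v j

/-- Squared Frobenius norm. -/
def frobSq {n p : ℕ} (A : Matrix (Fin n) (Fin p) ℝ) : ℝ := ∑ i, ∑ j, A i j ^ 2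

/-- `(q, X)` belongs to the second-order subjet `J^{2,-} φ (x)`. -/
def InSubjet {n : ℕ} (φ : Vec n → ℝ) (x q : Vec n) (X : Matrix (Fin n) (Fin n) ℝ) : Prop :=
  X.IsSymm ∧ ∀ ε > (0:ℝ), ∀ᶠ y in nhds x,
    φ x + dotp q (y - x) + (1/2) * quadForm X (y - x) - ε * eucNorm (y - x) ^ 2 ≤ φ y

/-- `(q, X)` belongs to the second-order superjet `J^{2,+} φ (x)`. -/
def InSuperjet {n : ℕ} (φ : Vec n → ℝ) (x q : Vec n) (X : Matrix (Fin n) (Fin n) ℝ) : Prop :=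
  X.IsSymm ∧ ∀ ε > (0:ℝ), ∀ᶠ y in nhds x,
    φ y ≤ φ x + dotp q (y - x) + (1/2) * quadForm X (y - x) + ε * eucNorm (y - x) ^ 2

/-- Polynomial growth. -/
def PolyGrowth {n : ℕ} (φ : Vec n → ℝ) : Prop :=
  ∃ (C : ℝ) (γ : ℕ), ∀ x, |φ x| ≤ C * (1 + eucNorm x ^ γ)

/-- The switching obstacle `max_{j ≠ i} (v^j(x) - g_{ij}(x))`. -/
def obstacle {k m : ℕ} (g : Fin m → Fin m → Vec k → ℝ) (v : Fin m → Vec k → ℝ)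
    (i : Fin m) (x : Vec k) : ℝ :=
  ⨆ j : {j : Fin m // j ≠ i}, (v j x - g i j x)

/-- The second order term of the system, evaluated on a jet `(q, X)`. -/
def ham {k d m : ℕ} (r : ℝ) (b : Vec k → Vec k) (σ : Vec k → Matrix (Fin k) (Fin d) ℝ)
    (f : Fin m → Vec k → (Fin m → ℝ) → Vec d → ℝ) (v : Fin m → Vec k → ℝ)
    (i : Fin m) (x q : Vec k) (X : Matrix (Fin k) (Fin k) ℝ) : ℝ :=
  r * v i x - dotp (b x) q - (1/2) * Matrix.trace (σ x * (σ x)ᵀ * X)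
    - f i x (fun j => v j x) ((σ x)ᵀ.mulVec q)

def IsSupersolution {k d m : ℕ} (r : ℝ) (b : Vec k → Vec k)
    (σ : Vec k → Matrix (Fin k) (Fin d) ℝ)
    (f : Fin m → Vec k → (Fin m → ℝ) → Vec d → ℝ)
    (g : Fin m → Fin m → Vec k → ℝ) (v : Fin m → Vec k → ℝ) : Prop :=
  ∀ (i : Fin m) (x q : Vec k) (X : Matrix (Fin k) (Fin k) ℝ), InSubjet (v i) x q X →
    0 ≤ min (v i x - obstacle g v i x) (ham r b σ f v i x q X)

def IsSubsolution {k d m : ℕ} (r : ℝ) (b : Vec k → Vec k)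
    (σ : Vec k → Matrix (Fin k) (Fin d) ℝ)
    (f : Fin m → Vec k → (Fin m → ℝ) → Vec d → ℝ)
    (g : Fin m → Fin m → Vec k → ℝ) (v : Fin m → Vec k → ℝ) : Prop :=
  ∀ (i : Fin m) (x q : Vec k) (X : Matrix (Fin k) (Fin k) ℝ), InSuperjet (v i) x q X →
    min (v i x - obstacle g v i x) (ham r b σ f v i x q X) ≤ 0

/-- Gradient with respect to the standard basis. -/
def grad {k : ℕ} (φ : Vec k → ℝ) (x : Vec k) : Vec k :=
  fun i => fderiv ℝ φ x (Pi.single i 1)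

/-- Hessian matrix with respect to the standard basis. -/
def hess {k : ℕ} (φ : Vec k → ℝ) (x : Vec k) : Matrix (Fin k) (Fin k) ℝ :=
  fun i j => fderiv ℝ (fun y => fderiv ℝ φ y (Pi.single j 1)) x (Pi.single i 1)

/-- The infinitesimal generator `𝓛φ = ½ Tr[σσᵀ D²φ] + b · Dφ`. -/
def genL {k d : ℕ} (b : Vec k → Vec k) (σ : Vec k → Matrix (Fin k) (Fin d) ℝ)
    (φ : Vec k → ℝ) (x : Vec k) : ℝ :=
  (1/2) * Matrix.trace (σ x * (σ x)ᵀ * hess φ x) + dotp (b x) (grad φ x)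

/-- The structural assumptions on the data `b, σ, f, g` that do not involve second
derivatives of the switching costs: Lipschitz continuity and linear growth of the
coefficients, continuity, uniform Lipschitz continuity in `(y,z)` with constant `C`,
polynomial growth and monotonicity of the generators, and nonnegativity, continuity
and polynomial growth of the switching costs. -/
def CoreAssumptions {k d m : ℕ} (b : Vec k → Vec k)
    (σ : Vec k → Matrix (Fin k) (Fin d) ℝ)
    (f : Fin m → Vec k → (Fin m → ℝ) → Vec d → ℝ)
    (g : Fin m → Fin m → Vec k → ℝ) (C : ℝ) : Prop :=
  (∃ Cb : ℝ, ∀ x y : Vec k, eucNorm (b x - b y) ≤ Cb * eucNorm (x - y) ∧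
      Real.sqrt (frobSq (σ x - σ y)) ≤ Cb * eucNorm (x - y)) ∧
  (∃ Cb : ℝ, ∀ x : Vec k, eucNorm (b x) ≤ Cb * (1 + eucNorm x) ∧
      Real.sqrt (frobSq (σ x)) ≤ Cb * (1 + eucNorm x)) ∧
  (∀ i, Continuous fun p : Vec k × (Fin m → ℝ) × Vec d => f i p.1 p.2.1 p.2.2) ∧
  (∀ i (x : Vec k) (y y' : Fin m → ℝ) (z z' : Vec d),
      |f i x y z - f i x y' z'| ≤ C * (eucNorm (y - y') + eucNorm (z - z'))) ∧
  (∀ i, PolyGrowth fun x => f i x 0 0) ∧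
  (∀ i j, j ≠ i → ∀ (x : Vec k) (z : Vec d) (y : Fin m → ℝ) (t t' : ℝ), t ≤ t' →
      f i x (Function.update y j t) z ≤ f i x (Function.update y j t') z) ∧
  (∀ i j x, 0 ≤ g i j x) ∧
  (∀ i x, g i i x = 0) ∧
  (∀ i j, Continuous (g i j)) ∧
  (∀ i j, PolyGrowth (g i j))

/-- The non-free-loop condition on the switching costs. -/
def NonFreeLoop {k m : ℕ} (g : Fin m → Fin m → Vec k → ℝ) : Prop :=
  ∀ (N : ℕ) (ι : ℕ → Fin m), 2 ≤ N → ι 0 ≠ ι 1 → ι 0 = ι (N - 1) →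
    (Finset.image ι (Finset.range N)).card = N - 1 →
    ∀ x : Vec k, 0 < ∑ l ∈ Finset.range (N - 1), g (ι l) (ι (l + 1)) x

/-- The full standing assumptions: the core assumptions, smoothness of the switching
costs with `𝓛 g_{ij} ≤ 0`, and the non-free-loop condition. -/
def DataAssumptions {k d m : ℕ} (b : Vec k → Vec k)
    (σ : Vec k → Matrix (Fin k) (Fin d) ℝ)
    (f : Fin m → Vec k → (Fin m → ℝ) → Vec d → ℝ)
    (g : Fin m → Fin m → Vec k → ℝ) (C : ℝ) : Prop :=
  CoreAssumptions b σ f g C ∧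
  (∀ i j, ContDiff ℝ 2 (g i j)) ∧
  (∀ i j x, genL b σ (g i j) x ≤ 0) ∧
  NonFreeLoop g


section Aux

lemma eucNorm_nonneg {n} (v : Vec n) : 0 ≤ eucNorm v := Real.sqrt_nonneg _

lemma eucNorm_sq {n} (v : Vec n) : eucNorm v ^ 2 = ∑ i, v i ^ 2 :=
  Real.sq_sqrt (Finset.sum_nonneg fun i _ => sq_nonneg _)

lemma eucNorm_zero {n} : eucNorm (0 : Vec n) = 0 := by simp [eucNorm]

lemma abs_coord_le {n} (v : Vec n) (i : Fin n) : |v i| ≤ eucNorm v := by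
  rw [← Real.sqrt_sq_eq_abs]
  exact Real.sqrt_le_sqrt (Finset.single_le_sum (f := fun i => v i ^ 2)
    (fun i _ => sq_nonneg _) (Finset.mem_univ i))

lemma pinorm_le_euc {n} (v : Vec n) : ‖v‖ ≤ eucNorm v := by
  rw [pi_norm_le_iff_of_nonneg (eucNorm_nonneg v)]
  intro i; rw [Real.norm_eq_abs]; exact abs_coord_le v i

lemma eucNorm_continuous {n} : Continuous (eucNorm (n := n)) :=
  Real.continuous_sqrt.comp (continuous_finset_sum _ fun i _ => (continuous_apply i).pow 2)

lemma lip_continuous {n m : ℕ} (b : Vec n → Vec m) (Cb : ℝ)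
    (h : ∀ x y, eucNorm (b x - b y) ≤ Cb * eucNorm (x - y)) : Continuous b := by
  rw [continuous_iff_continuousAt]
  intro x
  have h0 : Tendsto (fun y => eucNorm (b y - b x)) (nhds x) (nhds 0) := by
    apply squeeze_zero (fun y => eucNorm_nonneg _) (fun y => h y x)
    have : Continuous fun y : Vec n => Cb * eucNorm (y - x) :=
      continuous_const.mul (eucNorm_continuous.comp (continuous_id.sub continuous_const))
    have := this.tendsto x
    simpa [eucNorm_zero] using this
  rw [ContinuousAt, tendsto_pi_nhds]
  intro i
  rw [tendsto_iff_dist_tendsto_zero]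
  apply squeeze_zero (fun y => dist_nonneg) (fun y => ?_) h0
  rw [Real.dist_eq]
  simpa using abs_coord_le (b y - b x) i

lemma sig_continuous {k d : ℕ} (σ : Vec k → Matrix (Fin k) (Fin d) ℝ) (Cb : ℝ)
    (h : ∀ x y, Real.sqrt (frobSq (σ x - σ y)) ≤ Cb * eucNorm (x - y)) : Continuous σ := by
  rw [continuous_iff_continuousAt]
  intro x
  have h0 : Tendsto (fun y => Real.sqrt (frobSq (σ y - σ x))) (nhds x) (nhds 0) := by
    apply squeeze_zero (fun y => Real.sqrt_nonneg _) (fun y => h y x)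
    have : Continuous fun y : Vec k => Cb * eucNorm (y - x) :=
      continuous_const.mul (eucNorm_continuous.comp (continuous_id.sub continuous_const))
    have := this.tendsto x
    simpa [eucNorm_zero] using this
  rw [ContinuousAt]
  refine tendsto_pi_nhds.2 fun i => ?_
  refine tendsto_pi_nhds.2 fun j => ?_
  rw [tendsto_iff_dist_tendsto_zero]
  apply squeeze_zero (fun y => dist_nonneg) (fun y => ?_) h0
  rw [Real.dist_eq, ← Real.sqrt_sq_eq_abs]
  apply Real.sqrt_le_sqrt
  calc (σ y i j - σ x i j) ^ 2 = (σ y - σ x) i j ^ 2 := by simp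
    _ ≤ ∑ j', (σ y - σ x) i j' ^ 2 :=
        Finset.single_le_sum (f := fun j' => (σ y - σ x) i j' ^ 2) (fun _ _ => sq_nonneg _) (Finset.mem_univ j)
    _ ≤ frobSq (σ y - σ x) :=
        Finset.single_le_sum (f := fun i' => ∑ j', (σ y - σ x) i' j' ^ 2)
          (fun _ _ => Finset.sum_nonneg fun _ _ => sq_nonneg _) (Finset.mem_univ i)

lemma dotp_add_right {n} (q u v : Vec n) : dotp q (u + v) = dotp q u + dotp q v := by
  simp [dotp, mul_add, Finset.sum_add_distrib]

lemma dotp_split {n} (a b c w : Vec n) :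
    dotp (fun i => a i + b i + c i) w = dotp a w + dotp b w + dotp c w := by
  simp [dotp, add_mul, Finset.sum_add_distrib]

lemma sumsq_add {n} (w h : Vec n) :
    ∑ i, (w + h) i ^ 2 = ∑ i, w i ^ 2 + 2 * dotp h w + ∑ i, h i ^ 2 := by
  simp only [Pi.add_apply, dotp]
  rw [Finset.mul_sum, ← Finset.sum_add_distrib, ← Finset.sum_add_distrib]
  exact Finset.sum_congr rfl fun i _ => by ring

lemma quad_add {n} (X : Matrix (Fin n) (Fin n) ℝ) (hX : X.IsSymm) (w h : Vec n) :
    quadForm X (w + h) = quadForm X w + quadForm X h + 2 * dotp (X.mulVec h) w := by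
  have e1 : quadForm X (w + h) = ∑ i, ∑ j,
      (X i j * w i * w j + X i j * h i * h j + (X i j * w i * h j + X i j * h i * w j)) := by
    simp only [quadForm, Pi.add_apply]
    exact Finset.sum_congr rfl fun i _ => Finset.sum_congr rfl fun j _ => by ring
  have e2 : ∑ i, ∑ j, X i j * h i * w j = ∑ i, ∑ j, X i j * w i * h j := by
    rw [Finset.sum_comm]
    exact Finset.sum_congr rfl fun j _ => Finset.sum_congr rfl fun i _ => by
      rw [hX.apply]; ring
  have e3 : dotp (X.mulVec h) w = ∑ i, ∑ j, X i j * w i * h j := by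
    simp only [dotp, Matrix.mulVec, dotProduct]
    exact Finset.sum_congr rfl fun i _ => by rw [Finset.sum_mul]; exact Finset.sum_congr rfl fun j _ => by ring
  rw [e1]
  simp only [Finset.sum_add_distrib]
  rw [e2, e3]
  simp only [quadForm]
  ring

lemma quad_add_matrix {n} (A B : Matrix (Fin n) (Fin n) ℝ) (w : Vec n) :
    quadForm (A + B) w = quadForm A w + quadForm B w := by
  simp [quadForm, add_mul, Finset.sum_add_distrib]

lemma quad_smul_one {n} (c : ℝ) (w : Vec n) :
    quadForm (c • (1 : Matrix (Fin n) (Fin n) ℝ)) w = c * ∑ i, w i ^ 2 := by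
  simp only [quadForm, Matrix.smul_apply, Matrix.one_apply, smul_eq_mul, mul_ite, mul_one, mul_zero,
    ite_mul, zero_mul]
  rw [Finset.mul_sum]
  exact Finset.sum_congr rfl fun i _ => by
    rw [Finset.sum_ite_eq Finset.univ i fun j => c * w i * w j]
    simp; ring

lemma dotp_neg_left {n} (q v : Vec n) : dotp (-q) v = - dotp q v := by
  simp [dotp, Finset.sum_neg_distrib]

lemma quad_neg {n} (X : Matrix (Fin n) (Fin n) ℝ) (v : Vec n) : quadForm (-X) v = - quadForm X v := by
  simp [quadForm, Finset.sum_neg_distrib]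

/-- The quadratic test-function expansion. -/
lemma psi_expand {k} (X : Matrix (Fin k) (Fin k) ℝ) (hX : X.IsSymm) (q x : Vec k) (c : ℝ)
    (x' y : Vec k) :
    (dotp q (y - x) + (1/2) * quadForm X (y - x) + c * eucNorm (y - x) ^ 2)
      - (dotp q (x' - x) + (1/2) * quadForm X (x' - x) + c * eucNorm (x' - x) ^ 2)
    = dotp (fun i => q i + X.mulVec (x' - x) i + 2 * c * (x' - x) i) (y - x')
      + (1/2) * quadForm (X + (2 * c) • 1) (y - x') := by
  have hyx : y - x = (y - x') + (x' - x) := by abel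
  simp only [eucNorm_sq]
  rw [hyx, dotp_add_right, quad_add X hX, sumsq_add,
    dotp_split, quad_add_matrix, quad_smul_one]
  have : dotp (fun i => 2 * c * (x' - x) i) (y - x') = 2 * c * dotp (x' - x) (y - x') := by
    simp [dotp, Finset.mul_sum]; exact Finset.sum_congr rfl fun i _ => by ring
  rw [this]
  have hsym : dotp (x' - x) (y - x') = dotp (y - x') (x' - x) := by
    simp [dotp]; exact Finset.sum_congr rfl fun i _ => by ring
  rw [hsym]
  ring

lemma insubjet_iff_neg {n} (f : Vec n → ℝ) (x q : Vec n) (X : Matrix (Fin n) (Fin n) ℝ) :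
    InSubjet f x q X ↔ InSuperjet (fun y => -f y) x (-q) (-X) := by
  unfold InSubjet InSuperjet
  constructor <;> rintro ⟨h1, h2⟩ <;> refine ⟨?_, fun ε hε => ?_⟩
  · show (-X)ᵀ = -X; rw [Matrix.transpose_neg, h1]
  · filter_upwards [h2 ε hε] with y hy
    rw [dotp_neg_left, quad_neg]
    linarith
  · have : Xᵀ = X := by
      have := h1; rw [Matrix.IsSymm, Matrix.transpose_neg, neg_inj] at this; exact this
    exact this
  · filter_upwards [h2 ε hε] with y hy
    rw [dotp_neg_left, quad_neg] at hy
    linarith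

/-- Transfer of superjets from the uniform limit to the approximating sequence. -/
lemma jet_transfer {k : ℕ} (vn : ℕ → Vec k → ℝ) (vb : Vec k → ℝ)
    (hvnc : ∀ n, Continuous (vn n)) (hvbc : Continuous vb)
    (hconv : ∀ K : Set (Vec k), IsCompact K → TendstoUniformlyOn vn vb atTop K)
    (x q : Vec k) (X : Matrix (Fin k) (Fin k) ℝ)
    (hjet : InSuperjet vb x q X) (ε : ℝ) (hε : 0 < ε) :
    ∃ x' : ℕ → Vec k, Tendsto x' atTop (nhds x) ∧
      Tendsto (fun n => vn n (x' n)) atTop (nhds (vb x)) ∧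
      ∀ᶠ n in atTop, InSuperjet (vn n) (x' n)
        (fun i => q i + X.mulVec (x' n - x) i + 2 * (2 * ε) * (x' n - x) i)
        (X + (2 * (2 * ε)) • 1) := by
  obtain ⟨hX, hj⟩ := hjet
  obtain ⟨δ, hδ, hball⟩ := Metric.eventually_nhds_iff.1 (hj ε hε)
  set ψ : Vec k → ℝ := fun y =>
    vb x + dotp q (y - x) + (1/2) * quadForm X (y - x) + 2 * ε * eucNorm (y - x) ^ 2 with hψdef
  have hψx : ψ x = vb x := by simp [hψdef, dotp, quadForm, eucNorm]
  have hψc : Continuous ψ := by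
    apply Continuous.add
    apply Continuous.add
    apply Continuous.add continuous_const
    · exact continuous_finset_sum _ fun i _ => Continuous.mul continuous_const
        (((continuous_apply i).comp (continuous_id.sub continuous_const)))
    · exact continuous_const.mul <| continuous_finset_sum _ fun i _ =>
        continuous_finset_sum _ fun j _ =>
        (continuous_const.mul ((continuous_apply i).comp (continuous_id.sub continuous_const))).mul
          ((continuous_apply j).comp (continuous_id.sub continuous_const))
    · exact continuous_const.mul <|
        (eucNorm_continuous.comp (continuous_id.sub continuous_const)).pow 2
  have hgap : ∀ y : Vec k, dist y x < δ → vb y - ψ y ≤ -(ε * eucNorm (y - x) ^ 2) := by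
    intro y hy
    have := hball hy
    simp only [hψdef]
    linarith
  set B : Set (Vec k) := Metric.closedBall x (δ/3) with hBdef
  have hxB : x ∈ B := Metric.mem_closedBall_self (by linarith)
  have hBc : IsCompact B := isCompact_closedBall x (δ/3)
  have hex : ∀ n : ℕ, ∃ z ∈ B, IsMaxOn (fun y => vn n y - ψ y) B z := fun n =>
    hBc.exists_isMaxOn ⟨x, hxB⟩ ((hvnc n).sub hψc).continuousOn
  choose x' hx'B hx'max using hex
  have hU := Metric.tendstoUniformlyOn_iff.1 (hconv B hBc)
  -- key quantitative bound
  have hkey : ∀ ζ : ℝ, 0 < ζ → ∀ᶠ n in atTop, ε * eucNorm (x' n - x) ^ 2 ≤ 2 * ζ := by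
    intro ζ hζ
    filter_upwards [hU ζ hζ] with n hn
    have h1 : vn n x - ψ x ≤ vn n (x' n) - ψ (x' n) := hx'max n hxB
    have h2 : |vb (x' n) - vn n (x' n)| < ζ := by
      have := hn (x' n) (hx'B n); rwa [Real.dist_eq] at this
    have h3 : |vb x - vn n x| < ζ := by
      have := hn x hxB; rwa [Real.dist_eq] at this
    have h4 : vb (x' n) - ψ (x' n) ≤ -(ε * eucNorm (x' n - x) ^ 2) := by
      apply hgap
      have := hx'B n
      rw [hBdef, Metric.mem_closedBall] at this
      linarith
    rw [abs_lt] at h2 h3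
    rw [hψx] at h1
    linarith
  have hE : Tendsto (fun n => eucNorm (x' n - x)) atTop (nhds 0) := by
    rw [Metric.tendsto_atTop]
    intro ζ' hζ'
    have := hkey (ε * ζ' ^ 2 / 8) (by positivity)
    rw [eventually_atTop] at this
    obtain ⟨N, hN⟩ := this
    refine ⟨N, fun n hn => ?_⟩
    have := hN n hn
    have h0 := eucNorm_nonneg (x' n - x)
    rw [Real.dist_eq, sub_zero, abs_of_nonneg h0]
    have he2 : eucNorm (x' n - x) ^ 2 ≤ (ζ'/2) ^ 2 := by nlinarith
    have h5 := Real.sqrt_le_sqrt he2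
    rw [Real.sqrt_sq h0, Real.sqrt_sq (by positivity)] at h5
    linarith
  have hx't : Tendsto x' atTop (nhds x) := by
    rw [tendsto_iff_dist_tendsto_zero]
    apply squeeze_zero (fun n => dist_nonneg) (fun n => ?_) hE
    rw [dist_eq_norm]
    exact pinorm_le_euc _
  refine ⟨x', hx't, ?_, ?_⟩
  · exact TendstoUniformlyOn.tendsto_comp (hconv B hBc) hvbc.continuousWithinAt
      (tendsto_nhdsWithin_iff.2 ⟨hx't, Eventually.of_forall hx'B⟩)
  · have hclose : ∀ᶠ n in atTop, dist (x' n) x < δ/6 := by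
      have := Metric.tendsto_atTop.1 hx't (δ/6) (by linarith)
      rw [eventually_atTop]; obtain ⟨N, hN⟩ := this; exact ⟨N, hN⟩
    filter_upwards [hclose] with n hn
    constructor
    · exact hX.add ((Matrix.isSymm_one).smul (2 * (2*ε)))
    · intro ε' hε'
      rw [Metric.eventually_nhds_iff]
      refine ⟨δ/6, by linarith, fun y hy => ?_⟩
      have hyB : y ∈ B := by
        rw [hBdef, Metric.mem_closedBall]
        have := dist_triangle y (x' n) x
        linarith
      have hmax : vn n y - ψ y ≤ vn n (x' n) - ψ (x' n) := hx'max n hyB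
      have hexp := psi_expand X hX q x (2 * ε) (x' n) y
      have hnn : 0 ≤ ε' * eucNorm (y - x' n) ^ 2 :=
        mul_nonneg (le_of_lt hε') (sq_nonneg _)
      simp only [hψdef] at hmax
      linarith [hexp]

lemma trace_split {k : ℕ} (A X : Matrix (Fin k) (Fin k) ℝ) (c : ℝ) :
    Matrix.trace (A * (X + c • 1)) = Matrix.trace (A * X) + c * Matrix.trace A := by
  rw [Matrix.mul_add, Matrix.trace_add, Matrix.mul_smul, Matrix.trace_smul, Matrix.mul_one,
    smul_eq_mul]

lemma limit_F {k d : ℕ} (r : ℝ) (b : Vec k → Vec k) (σ : Vec k → Matrix (Fin k) (Fin d) ℝ)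
    (hbc : Continuous b) (hσc : Continuous σ)
    (fb : Vec k → ℝ → Vec d → ℝ)
    (hfc : Continuous fun p : Vec k × ℝ × Vec d => fb p.1 p.2.1 p.2.2)
    (Y : Matrix (Fin k) (Fin k) ℝ)
    (x' : ℕ → Vec k) (x : Vec k) (hx : Tendsto x' atTop (nhds x))
    (u : ℕ → ℝ) (ub : ℝ) (hu : Tendsto u atTop (nhds ub))
    (q' : ℕ → Vec k) (q : Vec k) (hq : Tendsto q' atTop (nhds q)) :
    Tendsto (fun n => r * u n - dotp (b (x' n)) (q' n)
      - (1/2) * Matrix.trace (σ (x' n) * (σ (x' n))ᵀ * Y)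
      - fb (x' n) (u n) ((σ (x' n))ᵀ.mulVec (q' n))) atTop
      (nhds (r * ub - dotp (b x) q - (1/2) * Matrix.trace (σ x * (σ x)ᵀ * Y)
        - fb x ub ((σ x)ᵀ.mulVec q))) := by
  have hbt : Tendsto (fun n => b (x' n)) atTop (nhds (b x)) := (hbc.tendsto x).comp hx
  have hdotc : Continuous fun p : Vec k × Vec k => dotp p.1 p.2 :=
    continuous_finset_sum _ fun i _ =>
      ((continuous_apply i).comp continuous_fst).mul ((continuous_apply i).comp continuous_snd)
  have h1 : Tendsto (fun n => dotp (b (x' n)) (q' n)) atTop (nhds (dotp (b x) q)) :=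
    (hdotc.tendsto _).comp (hbt.prodMk_nhds hq)
  have htrc : Continuous fun z : Vec k => Matrix.trace (σ z * (σ z)ᵀ * Y) :=
    ((hσc.matrix_mul hσc.matrix_transpose).matrix_mul continuous_const).matrix_trace
  have h2 : Tendsto (fun n => Matrix.trace (σ (x' n) * (σ (x' n))ᵀ * Y)) atTop
      (nhds (Matrix.trace (σ x * (σ x)ᵀ * Y))) := (htrc.tendsto x).comp hx
  have hmvc : Continuous fun p : Vec k × Vec k => (σ p.1)ᵀ.mulVec p.2 := by
    apply continuous_pi
    intro i
    simp only [Matrix.mulVec, dotProduct, Matrix.transpose_apply]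
    apply continuous_finset_sum
    intro j _
    exact (((continuous_apply i).comp ((continuous_apply j).comp
      (hσc.comp continuous_fst)))).mul ((continuous_apply j).comp continuous_snd)
  have h3 : Tendsto (fun n => (σ (x' n))ᵀ.mulVec (q' n)) atTop
      (nhds ((σ x)ᵀ.mulVec q)) := (hmvc.tendsto _).comp (hx.prodMk_nhds hq)
  have h4 : Tendsto (fun n => fb (x' n) (u n) ((σ (x' n))ᵀ.mulVec (q' n))) atTop
      (nhds (fb x ub ((σ x)ᵀ.mulVec q))) :=
    (hfc.tendsto _).comp (hx.prodMk_nhds (hu.prodMk_nhds h3))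
  exact (((hu.const_mul r).sub h1).sub (h2.const_mul (1/2))).sub h4

end Aux

/-- **Penalization limit for the obstacle problem.** If the continuous
viscosity solutions `v̄ⁿ` of the penalized equations
`r v - ⟨b, Dv⟩ - ½Tr[σσᵀ D²v] - f̄(x, v, σᵀ Dv) - n (v - φ)⁻ = 0` increase in `n` and
converge uniformly on compacts to a continuous `v̄ ≥ φ`, then `v̄` is a viscosity
solution of the obstacle problem
`min{ v̄ - φ, r v̄ - ⟨b, Dv̄⟩ - ½Tr[σσᵀ D²v̄] - f̄(x, v̄, σᵀ Dv̄) } = 0`. -/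
theorem statement11 {k d : ℕ} (hk : 1 ≤ k) (hd : 1 ≤ d) (r : ℝ) (hr : 0 < r)
    (b : Vec k → Vec k) (σ : Vec k → Matrix (Fin k) (Fin d) ℝ)
    (hb : ∃ Cb : ℝ, ∀ x y : Vec k, eucNorm (b x - b y) ≤ Cb * eucNorm (x - y) ∧
      Real.sqrt (frobSq (σ x - σ y)) ≤ Cb * eucNorm (x - y))
    (hb' : ∃ Cb : ℝ, ∀ x : Vec k, eucNorm (b x) ≤ Cb * (1 + eucNorm x) ∧
      Real.sqrt (frobSq (σ x)) ≤ Cb * (1 + eucNorm x))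
    (φ : Vec k → ℝ) (hφ : Continuous φ)
    (fb : Vec k → ℝ → Vec d → ℝ)
    (hfc : Continuous fun p : Vec k × ℝ × Vec d => fb p.1 p.2.1 p.2.2)
    (Cf : ℝ) (hflip : ∀ (x : Vec k) (y y' : ℝ) (z z' : Vec d),
      |fb x y z - fb x y' z'| ≤ Cf * (|y - y'| + eucNorm (z - z')))
    (vn : ℕ → Vec k → ℝ) (hvnc : ∀ n, Continuous (vn n))
    (hsoln : ∀ n : ℕ, 1 ≤ n →
      (∀ (x q : Vec k) (X : Matrix (Fin k) (Fin k) ℝ), InSuperjet (vn n) x q X →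
        r * vn n x - dotp (b x) q - (1/2) * Matrix.trace (σ x * (σ x)ᵀ * X)
          - fb x (vn n x) ((σ x)ᵀ.mulVec q) - (n : ℝ) * max (φ x - vn n x) 0 ≤ 0) ∧
      (∀ (x q : Vec k) (X : Matrix (Fin k) (Fin k) ℝ), InSubjet (vn n) x q X →
        0 ≤ r * vn n x - dotp (b x) q - (1/2) * Matrix.trace (σ x * (σ x)ᵀ * X)
          - fb x (vn n x) ((σ x)ᵀ.mulVec q) - (n : ℝ) * max (φ x - vn n x) 0))
    (hmono : ∀ n x, vn n x ≤ vn (n + 1) x)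
    (vbar : Vec k → ℝ) (hvbarc : Continuous vbar)
    (hconv : ∀ K : Set (Vec k), IsCompact K →
      TendstoUniformlyOn (fun n => vn n) vbar atTop K)
    (hge : ∀ x, φ x ≤ vbar x) :
    (∀ (x q : Vec k) (X : Matrix (Fin k) (Fin k) ℝ), InSuperjet vbar x q X →
      min (vbar x - φ x)
        (r * vbar x - dotp (b x) q - (1/2) * Matrix.trace (σ x * (σ x)ᵀ * X)
          - fb x (vbar x) ((σ x)ᵀ.mulVec q)) ≤ 0) ∧
    (∀ (x q : Vec k) (X : Matrix (Fin k) (Fin k) ℝ), InSubjet vbar x q X →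
      0 ≤ min (vbar x - φ x)
        (r * vbar x - dotp (b x) q - (1/2) * Matrix.trace (σ x * (σ x)ᵀ * X)
          - fb x (vbar x) ((σ x)ᵀ.mulVec q))) := by
  obtain ⟨Cb, hCb⟩ := hb
  have hbc : Continuous b := lip_continuous b Cb fun x y => (hCb x y).1
  have hσc : Continuous σ := sig_continuous σ Cb fun x y => (hCb x y).2
  constructor
  · -- subsolution part
    intro x q X hjet
    rcases le_or_gt (vbar x) (φ x) with hc | hc
    · exact min_le_of_left_le (by linarith)
    · apply min_le_of_right_le
      set T : ℝ := Matrix.trace (σ x * (σ x)ᵀ) with hT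
      set F : ℝ := r * vbar x - dotp (b x) q - (1/2) * Matrix.trace (σ x * (σ x)ᵀ * X)
        - fb x (vbar x) ((σ x)ᵀ.mulVec q) with hFdef
      have key : ∀ ε : ℝ, 0 < ε → F ≤ 2 * (ε * T) := by
        intro ε hε
        obtain ⟨x', hx't, hvt, hjets⟩ := jet_transfer vn vbar hvnc hvbarc hconv x q X hjet ε hε
        set c : ℝ := 2 * (2 * ε) with hc'
        set Ψ : Vec k → Vec k := fun z => fun i => q i + X.mulVec (z - x) i + c * (z - x) i
          with hΨ
        have hΨc : Continuous Ψ := by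
          apply continuous_pi
          intro i
          apply Continuous.add
          apply Continuous.add continuous_const
          · simp only [Matrix.mulVec, dotProduct]
            exact continuous_finset_sum _ fun j _ => continuous_const.mul
              ((continuous_apply j).comp (continuous_id.sub continuous_const))
          · exact continuous_const.mul
              ((continuous_apply i).comp (continuous_id.sub continuous_const))
        have hΨx : Ψ x = q := by
          funext i; simp [hΨ, Matrix.mulVec_zero]
        have hq't : Tendsto (fun n => Ψ (x' n)) atTop (nhds q) := by
          have := (hΨc.tendsto x).comp hx't
          rwa [hΨx] at this
        have hFt := limit_F r b σ hbc hσc fb hfc (X + c • 1) x' x hx't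
          (fun n => vn n (x' n)) (vbar x) hvt (fun n => Ψ (x' n)) q hq't
        have hpen : ∀ᶠ n in atTop, φ (x' n) ≤ vn n (x' n) := by
          have hφt : Tendsto (fun n => φ (x' n)) atTop (nhds (φ x)) := (hφ.tendsto x).comp hx't
          have := (hvt.sub hφt).eventually
            (eventually_gt_nhds (by linarith : (0:ℝ) < vbar x - φ x))
          filter_upwards [this] with n hn
          linarith
        have hle : ∀ᶠ n in atTop, r * vn n (x' n) - dotp (b (x' n)) (Ψ (x' n))
            - (1/2) * Matrix.trace (σ (x' n) * (σ (x' n))ᵀ * (X + c • 1))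
            - fb (x' n) (vn n (x' n)) ((σ (x' n))ᵀ.mulVec (Ψ (x' n))) ≤ 0 := by
          filter_upwards [hjets, hpen, eventually_ge_atTop 1] with n hjn hpn hn1
          have hs := (hsoln n hn1).1 (x' n) (Ψ (x' n)) (X + c • 1) hjn
          have hmax : max (φ (x' n) - vn n (x' n)) 0 = 0 := max_eq_right (by linarith)
          rw [hmax] at hs
          linarith
        have hlim := le_of_tendsto hFt hle
        rw [trace_split] at hlim
        have hcT : c * T = 4 * (ε * T) := by rw [hc']; ring
        rw [hFdef]
        linarith
      clear_value T F
      by_contra hF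
      push_neg at hF
      rcases le_or_gt T 0 with hT0 | hT0
      · have := key 1 one_pos; nlinarith
      · have h1 := key (F / (8 * T)) (div_pos hF (by linarith))
        have h2 : 2 * (F / (8 * T) * T) = F / 4 := by field_simp; ring
        rw [h2] at h1
        linarith
  · -- supersolution part
    intro x q X hjet
    refine le_min (by linarith [hge x]) ?_
    set T : ℝ := Matrix.trace (σ x * (σ x)ᵀ) with hT
    set F : ℝ := r * vbar x - dotp (b x) q - (1/2) * Matrix.trace (σ x * (σ x)ᵀ * X)
      - fb x (vbar x) ((σ x)ᵀ.mulVec q) with hFdef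
    have hvnc' : ∀ n, Continuous fun y => -(vn n y) := fun n => (hvnc n).neg
    have hvbarc' : Continuous fun y => -(vbar y) := hvbarc.neg
    have hconv' : ∀ K : Set (Vec k), IsCompact K →
        TendstoUniformlyOn (fun n => fun y => -(vn n y)) (fun y => -(vbar y)) atTop K := by
      intro K hK
      have := hconv K hK
      rw [Metric.tendstoUniformlyOn_iff] at this ⊢
      intro ζ hζ
      filter_upwards [this ζ hζ] with n hn y hy
      simpa [Real.dist_eq, neg_sub_neg, abs_sub_comm] using hn y hy
    have hneg : InSuperjet (fun y => -(vbar y)) x (-q) (-X) :=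
      (insubjet_iff_neg vbar x q X).1 hjet
    have key : ∀ ε : ℝ, 0 < ε → 0 ≤ F + 2 * (ε * T) := by
      intro ε hε
      obtain ⟨x', hx't, hvtneg, hjets⟩ := jet_transfer (fun n y => -(vn n y))
        (fun y => -(vbar y)) hvnc' hvbarc' hconv' x (-q) (-X) hneg ε hε
      set c : ℝ := 2 * (2 * ε) with hc'
      have hvt : Tendsto (fun n => vn n (x' n)) atTop (nhds (vbar x)) := by
        have := hvtneg.neg
        simpa using this
      set Ψ : Vec k → Vec k := fun z => fun i => q i + X.mulVec (z - x) i + (-c) * (z - x) i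
        with hΨ
      have hΨc : Continuous Ψ := by
        apply continuous_pi
        intro i
        apply Continuous.add
        apply Continuous.add continuous_const
        · simp only [Matrix.mulVec, dotProduct]
          exact continuous_finset_sum _ fun j _ => continuous_const.mul
            ((continuous_apply j).comp (continuous_id.sub continuous_const))
        · exact continuous_const.mul
            ((continuous_apply i).comp (continuous_id.sub continuous_const))
      have hΨx : Ψ x = q := by
        funext i; simp [hΨ, Matrix.mulVec_zero]
      have hq't : Tendsto (fun n => Ψ (x' n)) atTop (nhds q) := by
        have := (hΨc.tendsto x).comp hx't
        rwa [hΨx] at this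
      have hFt := limit_F r b σ hbc hσc fb hfc (X + (-c) • 1) x' x hx't
        (fun n => vn n (x' n)) (vbar x) hvt (fun n => Ψ (x' n)) q hq't
      have hle : ∀ᶠ n in atTop, 0 ≤ r * vn n (x' n) - dotp (b (x' n)) (Ψ (x' n))
          - (1/2) * Matrix.trace (σ (x' n) * (σ (x' n))ᵀ * (X + (-c) • 1))
          - fb (x' n) (vn n (x' n)) ((σ (x' n))ᵀ.mulVec (Ψ (x' n))) := by
        filter_upwards [hjets, eventually_ge_atTop 1] with n hjn hn1
        have hsub : InSubjet (vn n) (x' n) (Ψ (x' n)) (X + (-c) • 1) := by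
          rw [insubjet_iff_neg]
          have e1 : -(Ψ (x' n)) = fun i =>
              (-q) i + (-X).mulVec (x' n - x) i + c * (x' n - x) i := by
            funext i
            simp [hΨ, Matrix.neg_mulVec]
            ring
          have e2 : -(X + (-c) • 1) = (-X) + c • (1 : Matrix (Fin k) (Fin k) ℝ) := by
            rw [neg_add]
            congr 1
            rw [← neg_smul, neg_neg]
          rw [e1, e2]
          exact hjn
        have hs := (hsoln n hn1).2 (x' n) (Ψ (x' n)) (X + (-c) • 1) hsub
        have hmax : 0 ≤ (n : ℝ) * max (φ (x' n) - vn n (x' n)) 0 :=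
          mul_nonneg (Nat.cast_nonneg n) (le_max_right _ _)
        linarith
      have hlim := ge_of_tendsto hFt hle
      rw [trace_split] at hlim
      have hcT : (-c) * T = -(4 * (ε * T)) := by rw [hc']; ring
      rw [hFdef]
      linarith
    clear_value T F
    by_contra hF
    push_neg at hF
    rcases le_or_gt T 0 with hT0 | hT0
    · have := key 1 one_pos; nlinarith
    · have h1 := key ((-F) / (8 * T)) (div_pos (by linarith) (by linarith))
      have h2 : 2 * ((-F) / (8 * T) * T) = -(F / 4) := by field_simp; ring
      rw [h2] at h1
      linarith
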